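/- arXiv:math/0608271 — 2 statements merged into one kernel-verified Lean document; each statement's English description precedes it below -/
import Mathlib

section
/- Let θ > 1 be a Pisot number and λ = 1/θ. Then there exists a constant c₁ ∈ (0,1) such that for all n ≥ 1 and all sequences a₁,…,a_n and b₁,…,b_n in {0,1} with Σ_{i=1}^n a_i λ^i ≠ Σ_{i=1}^n b_i λ^i, one has |Σ_{i=1}^n a_i λ^i - Σ_{i=1}^n b_i λ^i| ≥ c₁ λ^n. -/
open Polynomial IntermediateField Finset

lemma geom_aux {t : ℝ} (h0 : 0 ≤ t) (h1 : t < 1) (n : ℕ) :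
    ∑ j ∈ Finset.range n, t ^ j ≤ 1 / (1 - t) := by
  have h1t : 0 < 1 - t := by linarith
  rw [geom_sum_eq (by intro h; rw [h] at h1; linarith : t ≠ 1), ← neg_sub (1:ℝ) (t^n),
    ← neg_sub (1:ℝ) t, neg_div_neg_eq]
  have hpn : 0 ≤ t ^ n := pow_nonneg h0 n
  gcongr
  linarith

set_option maxHeartbeats 1000000 in
set_option synthInstance.maxHeartbeats 200000 in
theorem stmt12 (θ lam : ℝ) (hθ1 : 1 < θ) (hint : IsIntegral ℤ θ)
    (hconj : ∀ z : ℂ, z ≠ (θ : ℂ) → Polynomial.aeval z (minpoly ℤ θ) = 0 → ‖z‖ < 1)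
    (hlam : lam = 1 / θ) :
    ∃ c₁ : ℝ, c₁ ∈ Set.Ioo (0 : ℝ) 1 ∧ ∀ n : ℕ, 1 ≤ n → ∀ a b : ℕ → ℝ,
      (∀ i, a i = 0 ∨ a i = 1) → (∀ i, b i = 0 ∨ b i = 1) →
      (∑ i ∈ Finset.Icc 1 n, a i * lam ^ i) ≠ (∑ i ∈ Finset.Icc 1 n, b i * lam ^ i) →
      c₁ * lam ^ n ≤
        |∑ i ∈ Finset.Icc 1 n, a i * lam ^ i - ∑ i ∈ Finset.Icc 1 n, b i * lam ^ i| := by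
  classical
  have hθ0 : (0:ℝ) < θ := lt_trans one_pos hθ1
  have hlam0 : 0 < lam := by rw [hlam]; positivity
  have hlamθ : lam * θ = 1 := by rw [hlam]; field_simp
  have hθQ : IsIntegral ℚ θ := hint.tower_top
  set K := IntermediateField.adjoin ℚ ({θ} : Set ℝ) with hK
  haveI : FiniteDimensional ℚ K := IntermediateField.adjoin.finiteDimensional hθQ
  set θK : K := ⟨θ, IntermediateField.mem_adjoin_simple_self ℚ θ⟩ with hθKdef
  have hval : algebraMap K ℝ θK = θ := rfl
  have hinj : Function.Injective (algebraMap K ℝ) := Subtype.val_injective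
  have hθKint : IsIntegral ℤ θK := (isIntegral_algebraMap_iff hinj).mp (hval ▸ hint)
  have hmin : minpoly ℚ θ = minpoly ℚ θK := by
    rw [← hval, minpoly.algebraMap_eq hinj]
  have hminZ : minpoly ℚ θ = (minpoly ℤ θ).map (algebraMap ℤ ℚ) :=
    minpoly.isIntegrallyClosed_eq_field_fractions' ℚ hint
  have hroot : ∀ σ : K →ₐ[ℚ] ℂ, Polynomial.aeval (σ θK) (minpoly ℤ θ) = 0 := by
    intro σ
    have h2 : Polynomial.aeval (σ θK) (minpoly ℚ θK) = 0 := by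
      rw [Polynomial.aeval_algHom_apply, minpoly.aeval, map_zero]
    rwa [← hmin, hminZ, Polynomial.aeval_map_algebraMap] at h2
  let ι : K →ₐ[ℚ] ℂ := (Complex.ofRealAm.restrictScalars ℚ).comp K.val
  have hι : ι θK = (θ : ℂ) := rfl
  -- the set of embeddings not fixing θ, and the constant C
  set T : Finset (K →ₐ[ℚ] ℂ) := Finset.univ.filter (fun σ => ¬ (σ θK = (θ:ℂ))) with hT
  have habs : ∀ σ ∈ T, ‖σ θK‖ < 1 := by
    intro σ hσ
    exact hconj _ ((Finset.mem_filter.mp hσ).2) (hroot σ)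
  set C : ℝ := ∏ σ ∈ T, 1/(1 - ‖σ θK‖) with hCdef
  have hC1 : 1 ≤ C := by
    rw [hCdef]
    have h := Finset.prod_le_prod (s := T) (f := fun _ => (1:ℝ))
      (g := fun σ => 1/(1 - ‖σ θK‖)) (fun _ _ => one_pos.le) ?_
    · simpa using h
    · intro σ hσ
      have h := habs σ hσ
      have h0 : 0 ≤ ‖σ θK‖ := norm_nonneg _
      show (1:ℝ) ≤ 1/(1 - ‖σ θK‖)
      rw [le_div_iff₀ (by linarith)]
      linarith
  have hC0 : 0 < C := lt_of_lt_of_le one_pos hC1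
  refine ⟨1/(2*C), ⟨by positivity, by rw [div_lt_one (by positivity)]; linarith⟩, ?_⟩
  intro n hn a b ha hb hne
  -- integer coefficients
  set c : ℕ → ℤ := fun i => (if a i = 1 then (1:ℤ) else 0) - (if b i = 1 then 1 else 0) with hcdef
  have hc : ∀ i, ((c i : ℝ)) = a i - b i := by
    intro i
    rcases ha i with h|h <;> rcases hb i with h'|h' <;> norm_num [hcdef, h, h']
  have hc1 : ∀ i, |c i| ≤ 1 := by
    intro i; simp only [hcdef]; split_ifs <;> norm_num
  set x : K := ∑ i ∈ Finset.Icc 1 n, (c i : K) * θK ^ (n - i) with hxdef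
  have hσx : ∀ σ : K →ₐ[ℚ] ℂ, σ x = ∑ i ∈ Finset.Icc 1 n, (c i : ℂ) * (σ θK)^(n-i) := by
    intro σ
    rw [hxdef, map_sum]
    exact Finset.sum_congr rfl fun i _ => by rw [map_mul, map_pow, map_intCast]
  have hxR : algebraMap K ℝ x = ∑ i ∈ Finset.Icc 1 n, (c i : ℝ) * θ^(n-i) := by
    rw [hxdef, map_sum]
    exact Finset.sum_congr rfl fun i _ => by rw [map_mul, map_pow, map_intCast, hval]
  set r : ℝ := |algebraMap K ℝ x| with hrdef
  -- the difference equals lam^n * (x : ℝ)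
  have hpow : ∀ i ∈ Finset.Icc 1 n, lam ^ i = lam ^ n * θ ^ (n-i) := by
    intro i hi
    obtain ⟨hi1, hin⟩ := Finset.mem_Icc.mp hi
    have e1 : lam ^ n = lam ^ i * lam ^ (n - i) := by rw [← pow_add]; congr 1; omega
    rw [e1, mul_assoc, ← mul_pow, hlamθ, one_pow, mul_one]
  have hdiff : (∑ i ∈ Finset.Icc 1 n, a i * lam ^ i) - (∑ i ∈ Finset.Icc 1 n, b i * lam ^ i)
      = lam ^ n * algebraMap K ℝ x := by
    rw [hxR, Finset.mul_sum, ← Finset.sum_sub_distrib]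
    refine Finset.sum_congr rfl fun i hi => ?_
    rw [hpow i hi, hc i]
    ring
  have hD0 : lam ^ n * algebraMap K ℝ x ≠ 0 := by
    rw [← hdiff]; exact sub_ne_zero_of_ne hne
  have hx0 : x ≠ 0 := by
    intro h; apply hD0; rw [h, map_zero, mul_zero]
  -- norm is a nonzero integer
  have hxint : IsIntegral ℤ x := by
    rw [hxdef]
    apply IsIntegral.sum
    intro i _
    exact (isIntegral_algebraMap (x := c i)).mul (hθKint.pow _)
  have hNint : IsIntegral ℤ (Algebra.norm ℚ x) := Algebra.isIntegral_norm ℚ hxint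
  obtain ⟨m, hm⟩ := IsIntegrallyClosed.isIntegral_iff.mp hNint
  have hN0 : Algebra.norm ℚ x ≠ 0 := by
    rw [Algebra.norm_ne_zero_iff]; exact hx0
  have hm0 : m ≠ 0 := by rintro rfl; apply hN0; rw [← hm, map_zero]
  have h1N : (1:ℝ) ≤ |((Algebra.norm ℚ x : ℚ) : ℝ)| := by
    have : ((Algebra.norm ℚ x : ℚ) : ℝ) = (m : ℝ) := by
      rw [← hm, eq_intCast (algebraMap ℤ ℚ) m]; norm_cast
    rw [this]
    exact_mod_cast Int.one_le_abs (by exact_mod_cast hm0)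
  -- product over embeddings
  have hprod : (1:ℝ) ≤ ∏ σ : K →ₐ[ℚ] ℂ, ‖σ x‖ := by
    have he := Algebra.norm_eq_prod_embeddings ℚ ℂ x
    have h2 : ‖algebraMap ℚ ℂ (Algebra.norm ℚ x)‖
        = ∏ σ : K →ₐ[ℚ] ℂ, ‖σ x‖ := by
      rw [he, norm_prod]
    rw [← h2]
    have h3 : algebraMap ℚ ℂ (Algebra.norm ℚ x) = (((Algebra.norm ℚ x : ℚ) : ℝ) : ℂ) := by
      rw [eq_ratCast (algebraMap ℚ ℂ)]; norm_cast
    rw [h3, Complex.norm_real, Real.norm_eq_abs]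
    exact h1N
  -- split the product
  rw [← Finset.prod_filter_mul_prod_filter_not Finset.univ (fun σ => σ θK = (θ:ℂ))] at hprod
  have hfix : ∏ σ ∈ Finset.univ.filter (fun σ : K →ₐ[ℚ] ℂ => σ θK = (θ:ℂ)),
      ‖σ x‖ = r ^ (Finset.univ.filter (fun σ : K →ₐ[ℚ] ℂ => σ θK = (θ:ℂ))).card := by
    rw [← Finset.prod_const]
    refine Finset.prod_congr rfl fun σ hσ => ?_
    have hσθ : σ θK = (θ:ℂ) := (Finset.mem_filter.mp hσ).2
    have : σ x = ((algebraMap K ℝ x : ℝ) : ℂ) := by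
      rw [hσx σ, hσθ, hxR, Complex.ofReal_sum]
      exact Finset.sum_congr rfl fun i _ => by push_cast; ring
    rw [this, Complex.norm_real, Real.norm_eq_abs]
  have hrest : ∏ σ ∈ T, ‖σ x‖ ≤ C := by
    rw [hCdef]
    apply Finset.prod_le_prod (fun σ _ => norm_nonneg _)
    intro σ hσ
    have ht1 : ‖σ θK‖ < 1 := habs σ hσ
    have ht0 : (0:ℝ) ≤ ‖σ θK‖ := norm_nonneg _
    calc ‖σ x‖ ≤ ∑ i ∈ Finset.Icc 1 n, ‖(c i : ℂ) * (σ θK)^(n-i)‖ := by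
          rw [hσx σ]; exact norm_sum_le _ _
      _ ≤ ∑ i ∈ Finset.Icc 1 n, (‖σ θK‖)^(n-i) := by
          refine Finset.sum_le_sum fun i _ => ?_
          rw [norm_mul, norm_pow]
          have : ‖(c i : ℂ)‖ ≤ 1 := by
            rw [Complex.norm_intCast]
            exact_mod_cast hc1 i
          nlinarith [pow_nonneg ht0 (n-i), this, norm_nonneg ((c i : ℂ))]
      _ = ∑ j ∈ Finset.range n, (‖σ θK‖)^j := by
          rw [← Finset.Ico_add_one_right_eq_Icc, Finset.sum_Ico_eq_sum_range,
            ← Finset.sum_range_reflect]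
          refine Finset.sum_congr (by norm_num) fun j hj => ?_
          congr 1
          simp only [Finset.mem_range] at hj
          omega
      _ ≤ 1/(1 - ‖σ θK‖) := geom_aux ht0 ht1 n
  -- conclude r ≥ 1/(2C)
  set k := (Finset.univ.filter (fun σ : K →ₐ[ℚ] ℂ => σ θK = (θ:ℂ))).card with hk
  have hk1 : 1 ≤ k := by
    rw [hk]
    apply Finset.card_pos.mpr
    exact ⟨ι, Finset.mem_filter.mpr ⟨Finset.mem_univ _, hι⟩⟩
  have hr0 : 0 ≤ r := abs_nonneg _
  have hkey : 1 ≤ r ^ k * C := by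
    calc (1:ℝ) ≤ _ := hprod
      _ ≤ r ^ k * C := by
        rw [hfix]
        exact mul_le_mul_of_nonneg_left hrest (pow_nonneg hr0 k)
  have hrC : 1/C ≤ r := by
    have hrk : 1/C ≤ r ^ k := by
      rw [div_le_iff₀ hC0]; linarith
    by_cases hr1 : 1 ≤ r
    · calc 1/C ≤ 1 := by rw [div_le_one hC0]; exact hC1
        _ ≤ r := hr1
    · push_neg at hr1
      calc 1/C ≤ r ^ k := hrk
        _ ≤ r ^ 1 := pow_le_pow_of_le_one hr0 hr1.le hk1
        _ = r := pow_one r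
  have hr2C : 1/(2*C) ≤ r := by
    calc 1/(2*C) ≤ 1/C := by
          rw [div_le_div_iff₀ (by positivity) hC0]; nlinarith
      _ ≤ r := hrC
  rw [hdiff, abs_mul, abs_of_pos (pow_pos hlam0 n)]
  calc 1/(2*C) * lam ^ n ≤ r * lam ^ n := by
        exact mul_le_mul_of_nonneg_right hr2C (pow_pos hlam0 n).le
    _ = lam ^ n * r := mul_comm _ _
end

section
/- Let λ ∈ ((√5-1)/2, 1), let ℓ ≥ 3 satisfy 1 < λ² + ⋯ + λ^ℓ, and let U = (λ^ℓ/(1-λ^ℓ), λ/(1-λ) - λ^ℓ/(1-λ^ℓ)). For a finite 0-1 word a of length n, write ξ(a) = Σ_{j=1}^n a_j λ^j and U_a = ξ(a) + λ^n U. Then U ⊆ (⋃_{a ∈ {0,1}^{ℓ-1}} U_{a0}) ∩ (⋃_{a ∈ {0,1}^{ℓ-1}} U_{a1}), i.e., every point of U lies in some interval U_{a0} with a ∈ {0,1}^{ℓ-1} and also in some interval U_{a'1} with a' ∈ {0,1}^{ℓ-1}. -/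
set_option maxHeartbeats 1000000

/-- geometric sum identity for `range` -/
lemma stmt15_geomS (x : ℝ) : ∀ n : ℕ,
    (1 - x) * ∑ j ∈ Finset.range n, x ^ (j + 1) = x - x ^ (n + 1) := by
  intro n
  induction n with
  | zero => simp
  | succ k ih => rw [Finset.sum_range_succ, mul_add, ih]; ring

/-- geometric sum identity for `Icc 2 n` -/
lemma stmt15_geomIcc (x : ℝ) (n : ℕ) (hn : 2 ≤ n) :
    (1 - x) * ∑ j ∈ Finset.Icc 2 n, x ^ j = x ^ 2 - x ^ (n + 1) := by
  induction n, hn using Nat.le_induction with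
  | base => rw [Finset.Icc_self, Finset.sum_singleton]; ring
  | succ n hn ih => rw [Finset.sum_Icc_succ_top (by omega), mul_add, ih]; ring

lemma stmt15_gap (lam : ℝ) (hh : 1 / 2 < lam) (P Q : ℝ) (hPQ : 1 < Q - P) :
    ∀ m : ℕ, 1 < lam ^ m * (Q - P) + ∑ j ∈ Finset.range m, lam ^ (j + 1) := by
  intro m
  induction m with
  | zero => simpa using hPQ
  | succ n ih =>
    have hsum : ∑ j ∈ Finset.range (n + 1), lam ^ (j + 1)
        = lam * (∑ j ∈ Finset.range n, lam ^ (j + 1)) + lam := by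
      rw [Finset.sum_range_succ', Finset.mul_sum]
      congr 1
      · exact Finset.sum_congr rfl fun j _ => by ring
      · simp
    have hkey : lam ^ (n + 1) * (Q - P) + ∑ j ∈ Finset.range (n + 1), lam ^ (j + 1)
        = lam * (lam ^ n * (Q - P) + ∑ j ∈ Finset.range n, lam ^ (j + 1)) + lam := by
      rw [hsum, pow_succ]; ring
    rw [hkey]
    nlinarith [ih]

lemma stmt15_main (lam : ℝ) (hh : 1 / 2 < lam) (P Q : ℝ) (hPQ : 1 < Q - P) :
    ∀ (m : ℕ) (s : ℝ), lam ^ m * P < s →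
      s < lam ^ m * Q + ∑ j ∈ Finset.range m, lam ^ (j + 1) →
      ∃ a : Fin m → Fin 2,
        lam ^ m * P < s - ∑ j : Fin m, (a j : ℝ) * lam ^ ((j : ℕ) + 1) ∧
        s - ∑ j : Fin m, (a j : ℝ) * lam ^ ((j : ℕ) + 1) < lam ^ m * Q := by
  intro m
  induction m with
  | zero =>
    intro s h1 h2
    exact ⟨fun j => j.elim0, by simpa using h1, by simpa using h2⟩
  | succ n ih =>
    intro s hs1 hs2
    have hl0 : 0 < lam := by linarith
    have hG := stmt15_gap lam hh P Q hPQ n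
    have hsum : ∑ j ∈ Finset.range (n + 1), lam ^ (j + 1)
        = lam * (∑ j ∈ Finset.range n, lam ^ (j + 1)) + lam := by
      rw [Finset.sum_range_succ', Finset.mul_sum]
      congr 1
      · exact Finset.sum_congr rfl fun j _ => by ring
      · simp
    have hslam : lam * (s / lam) = s := by field_simp
    have hconskey : ∀ (c : Fin 2) (a : Fin n → Fin 2),
        ∑ j : Fin (n + 1), ((Fin.cons c a : Fin (n + 1) → Fin 2) j : ℝ) * lam ^ ((j : ℕ) + 1)
        = (c : ℝ) * lam + lam * ∑ j : Fin n, (a j : ℝ) * lam ^ ((j : ℕ) + 1) := by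
      intro c a
      rw [Fin.sum_univ_succ, Finset.mul_sum]
      congr 1
      · simp
      · refine Finset.sum_congr rfl fun j _ => ?_
        simp only [Fin.cons_succ, Fin.val_succ]
        ring
    by_cases hc : s < lam * (lam ^ n * Q + ∑ j ∈ Finset.range n, lam ^ (j + 1))
    · -- digit 0
      have hlow : lam ^ n * P < s / lam := by
        rw [lt_div_iff₀ hl0]
        have heq : lam ^ n * P * lam = lam ^ (n + 1) * P := by rw [pow_succ]; ring
        linarith [hs1]
      have hhigh : s / lam < lam ^ n * Q + ∑ j ∈ Finset.range n, lam ^ (j + 1) := by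
        rw [div_lt_iff₀ hl0]
        linarith [hc]
      obtain ⟨a, ha1, ha2⟩ := ih (s / lam) hlow hhigh
      refine ⟨Fin.cons 0 a, ?_, ?_⟩ <;> rw [hconskey 0 a] <;>
        · simp only [Fin.val_zero, Nat.cast_zero, zero_mul]
          rw [pow_succ]
          nlinarith [mul_lt_mul_of_pos_left ha1 hl0, mul_lt_mul_of_pos_left ha2 hl0, hslam]
    · -- digit 1
      push_neg at hc
      have hlow : lam ^ n * P < s / lam - 1 := by
        have h2 : lam * (lam ^ n * P + 1) < lam * (lam ^ n * Q + ∑ j ∈ Finset.range n, lam ^ (j + 1)) := by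
          apply mul_lt_mul_of_pos_left _ hl0
          nlinarith [hG]
        rw [lt_sub_iff_add_lt, lt_div_iff₀ hl0]
        have heq : (lam ^ n * P + 1) * lam = lam * (lam ^ n * P + 1) := by ring
        linarith [h2, hc]
      have hhigh : s / lam - 1 < lam ^ n * Q + ∑ j ∈ Finset.range n, lam ^ (j + 1) := by
        rw [sub_lt_iff_lt_add, div_lt_iff₀ hl0]
        rw [hsum] at hs2
        have heq : (lam ^ n * Q + ∑ j ∈ Finset.range n, lam ^ (j + 1) + 1) * lam
            = lam ^ (n + 1) * Q + (lam * ∑ j ∈ Finset.range n, lam ^ (j + 1) + lam) := by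
          rw [pow_succ]; ring
        linarith [hs2]
      obtain ⟨a, ha1, ha2⟩ := ih (s / lam - 1) hlow hhigh
      refine ⟨Fin.cons 1 a, ?_, ?_⟩ <;> rw [hconskey 1 a] <;>
        · simp only [Fin.val_one, Nat.cast_one, one_mul]
          rw [pow_succ]
          nlinarith [mul_lt_mul_of_pos_left ha1 hl0, mul_lt_mul_of_pos_left ha2 hl0, hslam]

theorem stmt15 (lam : ℝ) (hg : (Real.sqrt 5 - 1) / 2 < lam) (h1 : lam < 1)
    (l : ℕ) (hl : 3 ≤ l) (hsum : 1 < ∑ j ∈ Finset.Icc 2 l, lam ^ j) :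
    ∀ x ∈ Set.Ioo (lam ^ l / (1 - lam ^ l)) (lam / (1 - lam) - lam ^ l / (1 - lam ^ l)),
      (∃ a : Fin (l - 1) → Fin 2,
          x ∈ (fun y => (∑ j : Fin (l - 1), (a j : ℝ) * lam ^ ((j : ℕ) + 1)) + lam ^ l * y) ''
            Set.Ioo (lam ^ l / (1 - lam ^ l)) (lam / (1 - lam) - lam ^ l / (1 - lam ^ l))) ∧
      (∃ a : Fin (l - 1) → Fin 2,
          x ∈ (fun y =>
              (∑ j : Fin (l - 1), (a j : ℝ) * lam ^ ((j : ℕ) + 1)) + lam ^ l + lam ^ l * y) ''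
            Set.Ioo (lam ^ l / (1 - lam ^ l)) (lam / (1 - lam) - lam ^ l / (1 - lam ^ l))) := by
  intro x hx
  obtain ⟨hx1, hx2⟩ := hx
  have h5 : Real.sqrt 5 * Real.sqrt 5 = 5 := Real.mul_self_sqrt (by norm_num)
  have h5nn : 0 ≤ Real.sqrt 5 := Real.sqrt_nonneg 5
  have hs2 : 2 < Real.sqrt 5 := by nlinarith
  have hhalf : 1 / 2 < lam := by linarith
  have hl0 : 0 < lam := by linarith
  have hD : 0 < 1 - lam := by linarith
  have he0 : 0 < lam ^ l := pow_pos hl0 l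
  have he1 : lam ^ l < 1 := pow_lt_one₀ hl0.le h1 (by omega)
  have hE : 0 < 1 - lam ^ l := by linarith
  set U : ℝ := lam ^ l / (1 - lam ^ l) with hUdef
  set V : ℝ := lam / (1 - lam) - U with hVdef
  have hU0 : 0 < U := div_pos he0 hE
  -- key from hsum : lam * lam^l < lam^2 + lam - 1
  have hicc := stmt15_geomIcc lam l (by omega)
  have hkey : lam * lam ^ l < lam ^ 2 + lam - 1 := by
    have h2 : (1 - lam) * 1 < (1 - lam) * ∑ j ∈ Finset.Icc 2 l, lam ^ j :=
      (mul_lt_mul_iff_right₀ hD).mpr hsum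
    rw [hicc] at h2
    nlinarith [h2, pow_succ lam l]
  -- U identity
  have hUe : lam ^ l * (U + 1) = U := by
    rw [hUdef]; field_simp; ring
  -- geometric sum S
  set S : ℝ := ∑ j ∈ Finset.range (l - 1), lam ^ (j + 1) with hSdef
  have hSid : (1 - lam) * S = lam - lam ^ l := by
    have := stmt15_geomS lam (l - 1)
    rw [show l - 1 + 1 = l by omega] at this
    exact this
  have hSval : S = (lam - lam ^ l) / (1 - lam) := by
    rw [eq_div_iff hD.ne']; linarith [hSid]
  -- V identity : lam^l * V + S = V
  have hSV : lam ^ l * V + S = V := by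
    rw [hSval, hVdef, hUdef]
    field_simp
    ring
  -- gap bound : 1 < lam * V - lam * U
  have hgap : 1 < lam * V - lam * U := by
    have hcl : (1 - lam) * (1 - lam ^ l)
        < lam ^ 2 * (1 - lam ^ l) - 2 * lam * lam ^ l * (1 - lam) := by
      nlinarith [hkey, mul_nonneg he0.le (sq_nonneg (1 - lam))]
    have h2 : lam * (lam / (1 - lam) - lam ^ l / (1 - lam ^ l)) - lam * (lam ^ l / (1 - lam ^ l))
        = (lam ^ 2 * (1 - lam ^ l) - 2 * lam * lam ^ l * (1 - lam)) / ((1 - lam) * (1 - lam ^ l)) := by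
      field_simp
      ring
    rw [hVdef, hUdef, h2, lt_div_iff₀ (mul_pos hD hE)]
    linarith [hcl]
  have hpow : lam ^ (l - 1) * lam = lam ^ l := by
    rw [← pow_succ, show l - 1 + 1 = l by omega]
  constructor
  · -- last digit 0
    obtain ⟨a, ha1, ha2⟩ := stmt15_main lam hhalf (lam * U) (lam * V)
      (by linarith [hgap]) (l - 1) x
      (by
        have heq : lam ^ (l - 1) * (lam * U) = lam ^ l * U := by rw [← hpow]; ring
        rw [heq]
        nlinarith [mul_pos hE hU0, hx1])
      (by
        have : lam ^ (l - 1) * (lam * V) + S = V := by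
          rw [show lam ^ (l - 1) * (lam * V) = lam ^ l * V by rw [← hpow]; ring]
          exact hSV
        rw [this]; exact hx2)
    rw [show lam ^ (l - 1) * (lam * U) = lam ^ l * U by rw [← hpow]; ring] at ha1
    rw [show lam ^ (l - 1) * (lam * V) = lam ^ l * V by rw [← hpow]; ring] at ha2
    set xi : ℝ := ∑ j : Fin (l - 1), (a j : ℝ) * lam ^ ((j : ℕ) + 1) with hxidef
    refine ⟨a, (x - xi) / lam ^ l, ⟨?_, ?_⟩, ?_⟩
    · rw [hUdef] at ha1 ⊢
      rw [lt_div_iff₀ he0]; linarith [ha1]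
    · rw [hVdef, hUdef] at ha2 ⊢
      rw [div_lt_iff₀ he0]; linarith [ha2]
    · field_simp; rw [hxidef]; ring
  · -- last digit 1
    obtain ⟨a, ha1, ha2⟩ := stmt15_main lam hhalf (lam * (U + 1)) (lam * (V + 1))
      (by linarith [hgap]) (l - 1) x
      (by
        have : lam ^ (l - 1) * (lam * (U + 1)) = U := by
          rw [show lam ^ (l - 1) * (lam * (U + 1)) = lam ^ l * (U + 1) by rw [← hpow]; ring]
          exact hUe
        rw [this]; exact hx1)
      (by
        have : lam ^ (l - 1) * (lam * (V + 1)) + S = V + lam ^ l := by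
          rw [show lam ^ (l - 1) * (lam * (V + 1)) = lam ^ l * V + lam ^ l by rw [← hpow]; ring]
          linarith [hSV]
        rw [this]; linarith [hx2, he0])
    rw [show lam ^ (l - 1) * (lam * (U + 1)) = lam ^ l * (U + 1) by rw [← hpow]; ring] at ha1
    rw [show lam ^ (l - 1) * (lam * (V + 1)) = lam ^ l * (V + 1) by rw [← hpow]; ring] at ha2
    set xi : ℝ := ∑ j : Fin (l - 1), (a j : ℝ) * lam ^ ((j : ℕ) + 1) with hxidef
    refine ⟨a, (x - xi) / lam ^ l - 1, ⟨?_, ?_⟩, ?_⟩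
    · rw [hUdef] at ha1 ⊢
      rw [lt_sub_iff_add_lt, lt_div_iff₀ he0]; linarith [ha1]
    · rw [hVdef, hUdef] at ha2 ⊢
      rw [sub_lt_iff_lt_add, div_lt_iff₀ he0]; linarith [ha2]
    · field_simp; rw [hxidef]; ring
end
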